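/- arXiv:2105.05691 — 7 statements merged into one kernel-verified Lean document; each statement's English description precedes it below -/
import Mathlib

section
/- If T1 and T2 are quasi strictly nonexpansive self-mappings of a metric space (G,d) with Fix T1 ∩ Fix T2 ≠ ∅, then Fix(T1 ∘ T2) = Fix T1 ∩ Fix T2. -/
/-- If `T1` and `T2` are quasi strictly nonexpansive self-mappings of a metric space
with a common fixed point, then `Fix (T1 ∘ T2) = Fix T1 ∩ Fix T2`. -/
theorem fix_comp_of_quasi_strictly_nonexpansive {G : Type*} [MetricSpace G]
    (T1 T2 : G → G)
    (h1 : ∀ x y : G, T1 y = y → T1 x ≠ x → dist (T1 x) y < dist x y)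
    (h2 : ∀ x y : G, T2 y = y → T2 x ≠ x → dist (T2 x) y < dist x y)
    (hne : ∃ z : G, T1 z = z ∧ T2 z = z) :
    {x : G | T1 (T2 x) = x} = {x : G | T1 x = x} ∩ {x : G | T2 x = x} := by
  obtain ⟨z, hz1, hz2⟩ := hne
  ext x
  simp only [Set.mem_setOf_eq, Set.mem_inter_iff]
  constructor
  · intro hx
    have h2x : T2 x = x := by
      by_contra hT2
      have hlt : dist (T2 x) z < dist x z := h2 x z hz2 hT2
      rcases eq_or_ne (T1 (T2 x)) (T2 x) with he | he
      · rw [hx] at he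
        rw [← he] at hlt
        exact lt_irrefl _ hlt
      · have := h1 (T2 x) z hz1 he
        rw [hx] at this
        exact lt_irrefl _ (this.trans hlt)
    rw [h2x] at hx
    exact ⟨hx, h2x⟩
  · rintro ⟨ha, hb⟩
    rw [hb, ha]
end

section
/- Let (G,d) be a p-uniformly convex space with constant c > 0. Let T0: D → G be pointwise almost α-firmly nonexpansive at y with constant α₀ and violation ε₀ on D, and T1: T0(D) → G pointwise almost α-firmly nonexpansive at T0 y with constant α₁ and violation ε₁. If for some ᾱ ∈ (0,1) the inequality ((1−ᾱ)/ᾱ) ψ_{T1∘T0}(x,y) ≤ (1+ε₁)((1−α₀)/α₀) ψ_{T0}(x,y) + ((1−α₁)/α₁) ψ_{T1}(T0 x, T0 y) holds for all x ∈ D, then T1 ∘ T0 is pointwise almost α-firmly nonexpansive at y on D with constant ᾱ and violation ε₀ + ε₁ + ε₀ε₁. -/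
/-- The transport discrepancy of a mapping `T` in a `p`-uniformly convex space with constant `c`. -/
noncomputable def psi {G : Type*} [MetricSpace G] (p c : ℝ) (T : G → G) (x y : G) : ℝ :=
  c / 2 * (dist (T x) x ^ p + dist (T y) y ^ p + dist (T x) (T y) ^ p + dist x y ^ p
    - dist (T x) y ^ p - dist x (T y) ^ p)

/-- Composition of pointwise almost `α`-firmly nonexpansive maps: if the transport-discrepancy
inequality holds, then `T1 ∘ T0` is pointwise almost `α`-firmly nonexpansive at `y` on `D` with
constant `ᾱ` and violation `ε₀ + ε₁ + ε₀ε₁`. -/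
theorem pafne_comp {G : Type*} [MetricSpace G] (p c : ℝ) (hp : 1 < p) (hc : 0 < c)
    (D : Set G) (T0 T1 : G → G) (y : G) (hyD : y ∈ D)
    (α₀ α₁ abar ε₀ ε₁ : ℝ)
    (hα₀ : α₀ ∈ Set.Ioo (0:ℝ) 1) (hα₁ : α₁ ∈ Set.Ioo (0:ℝ) 1) (habar : abar ∈ Set.Ioo (0:ℝ) 1)
    (hε₀ : 0 ≤ ε₀) (hε₁ : 0 ≤ ε₁)
    (h0 : ∀ x ∈ D, dist (T0 x) (T0 y) ^ p
        ≤ (1 + ε₀) * dist x y ^ p - (1 - α₀) / α₀ * psi p c T0 x y)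
    (h1 : ∀ z ∈ T0 '' D, dist (T1 z) (T1 (T0 y)) ^ p
        ≤ (1 + ε₁) * dist z (T0 y) ^ p - (1 - α₁) / α₁ * psi p c T1 z (T0 y))
    (hkey : ∀ x ∈ D, (1 - abar) / abar * psi p c (T1 ∘ T0) x y
        ≤ (1 + ε₁) * ((1 - α₀) / α₀ * psi p c T0 x y)
          + (1 - α₁) / α₁ * psi p c T1 (T0 x) (T0 y)) :
    ∀ x ∈ D, dist ((T1 ∘ T0) x) ((T1 ∘ T0) y) ^ p
      ≤ (1 + (ε₀ + ε₁ + ε₀ * ε₁)) * dist x y ^ p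
        - (1 - abar) / abar * psi p c (T1 ∘ T0) x y := by
  intro x hx
  have h0' := h0 x hx
  have h1' := h1 (T0 x) ⟨x, hx, rfl⟩
  have hk := hkey x hx
  have he : (0:ℝ) ≤ 1 + ε₁ := by linarith
  simp only [Function.comp_apply] at *
  nlinarith [mul_le_mul_of_nonneg_left h0' he]
end

section
/- Let (G,d) be a p-uniformly convex space with constant c > 0, D ⊂ G, T0: D → G pointwise almost α-firmly nonexpansive at y with constant α₀ and violation ε₀, and T1: T0(D) → G pointwise almost α-firmly nonexpansive at y with constant α₁ and violation ε₁, where y ∈ Fix T0 ∩ Fix T1. Then T1 ∘ T0 is pointwise almost α-firmly nonexpansive at y on D with violation ε₀ + ε₁ + ε₀ε₁ and constant ᾱ = (α₀ + α₁ − 2α₀α₁) / ((c/2)(1 − α₀ − α₁ + α₀α₁) + α₀ + α₁ − 2α₀α₁). -/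
lemma pafne_aux_const (c α₀ α₁ : ℝ) (hc : 0 < c)
    (h₀0 : 0 < α₀) (h₀1 : α₀ < 1) (h₁0 : 0 < α₁) (h₁1 : α₁ < 1) :
    (1 - (α₀ + α₁ - 2 * α₀ * α₁)
          / (c / 2 * (1 - α₀ - α₁ + α₀ * α₁) + α₀ + α₁ - 2 * α₀ * α₁))
      / ((α₀ + α₁ - 2 * α₀ * α₁)
          / (c / 2 * (1 - α₀ - α₁ + α₀ * α₁) + α₀ + α₁ - 2 * α₀ * α₁))
    = c / 2 * ((1 - α₀) / α₀ * ((1 - α₁) / α₁) / ((1 - α₀) / α₀ + (1 - α₁) / α₁)) := by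
  have hS : 0 < α₀ + α₁ - 2 * α₀ * α₁ := by
    have h1 : 0 < α₀ * (1 - α₁) := mul_pos h₀0 (by linarith)
    have h2 : 0 < α₁ * (1 - α₀) := mul_pos h₁0 (by linarith)
    linarith [h1, h2]
  have hM : 0 < c / 2 * (1 - α₀ - α₁ + α₀ * α₁) := by
    rw [show (1 - α₀ - α₁ + α₀ * α₁) = (1 - α₀) * (1 - α₁) from by ring]
    exact mul_pos (by linarith) (mul_pos (by linarith) (by linarith))
  have hMden : 0 < c / 2 * (1 - α₀ - α₁ + α₀ * α₁) + α₀ + α₁ - 2 * α₀ * α₁ := by linarith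
  have hsum : 0 < (1 - α₀) / α₀ + (1 - α₁) / α₁ :=
    add_pos (div_pos (by linarith) h₀0) (div_pos (by linarith) h₁0)
  rw [one_sub_div hMden.ne', div_div_div_cancel_right₀ hMden.ne']
  rw [show ((1 - α₀) / α₀ * ((1 - α₁) / α₁)) = (1 - α₀) * (1 - α₁) / (α₀ * α₁) from
    div_mul_div_comm _ _ _ _]
  rw [show ((1 - α₀) / α₀ + (1 - α₁) / α₁) = (α₀ + α₁ - 2 * α₀ * α₁) / (α₀ * α₁) from by
    rw [div_add_div _ _ h₀0.ne' h₁0.ne', div_eq_div_iff (by positivity) (by positivity)]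
    ring]
  rw [div_div_div_cancel_right₀ (by positivity : α₀ * α₁ ≠ 0)]
  rw [show c / 2 * (1 - α₀ - α₁ + α₀ * α₁) + α₀ + α₁ - 2 * α₀ * α₁
        - (α₀ + α₁ - 2 * α₀ * α₁) = c / 2 * (1 - α₀ - α₁ + α₀ * α₁) from by ring]
  rw [mul_div_assoc]
  congr 1
  ring


lemma pafne_aux_ineq (c k₀ k₁ U V W : ℝ) (hk₀ : 0 < k₀) (hk₁ : 0 < k₁)
    (h : c / 2 * (k₁ / (k₀ + k₁)) * (1 - k₁ / (k₀ + k₁)) * W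
      ≤ (1 - k₁ / (k₀ + k₁)) * U + k₁ / (k₀ + k₁) * V) :
    c / 2 * (k₀ * k₁ / (k₀ + k₁)) * W ≤ k₀ * U + k₁ * V := by
  have hsum : 0 < k₀ + k₁ := by linarith
  have e : (1:ℝ) - k₁ / (k₀ + k₁) = k₀ / (k₀ + k₁) := by
    rw [one_sub_div hsum.ne', add_sub_cancel_right]
  rw [e] at h
  have h3 := mul_le_mul_of_nonneg_left h hsum.le
  calc c / 2 * (k₀ * k₁ / (k₀ + k₁)) * W
      = (k₀ + k₁) * (c / 2 * (k₁ / (k₀ + k₁)) * (k₀ / (k₀ + k₁)) * W) := by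
        field_simp
    _ ≤ (k₀ + k₁) * (k₀ / (k₀ + k₁) * U + k₁ / (k₀ + k₁) * V) := h3
    _ = k₀ * U + k₁ * V := by field_simp

/-- Composition of pointwise almost `α`-firmly nonexpansive mappings at a common fixed
point `y` is pointwise almost `α`-firmly nonexpansive with the explicit constant `ᾱ` and
violation `ε₀ + ε₁ + ε₀ε₁`. -/
theorem pafne_comp_explicit_constant {G : Type*} [MetricSpace G] (p c : ℝ)
    (hp : 1 < p) (hc : 0 < c)
    (geo : G → G → ℝ → G)
    (hcvx : ∀ (x y z : G), ∀ t ∈ Set.Icc (0:ℝ) 1,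
      dist z (geo x y t) ^ p
        ≤ (1 - t) * dist z x ^ p + t * dist z y ^ p - c / 2 * t * (1 - t) * dist x y ^ p)
    (D : Set G) (T0 T1 : G → G) (y : G) (hyD : y ∈ D)
    (hy0 : T0 y = y) (hy1 : T1 y = y)
    (α₀ α₁ ε₀ ε₁ : ℝ)
    (hα₀ : α₀ ∈ Set.Ioo (0:ℝ) 1) (hα₁ : α₁ ∈ Set.Ioo (0:ℝ) 1)
    (hε₀ : 0 ≤ ε₀) (hε₁ : 0 ≤ ε₁)
    (h0 : ∀ x ∈ D, dist (T0 x) y ^ p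
        ≤ (1 + ε₀) * dist x y ^ p - (1 - α₀) / α₀ * (c / 2 * dist x (T0 x) ^ p))
    (h1 : ∀ z ∈ T0 '' D, dist (T1 z) y ^ p
        ≤ (1 + ε₁) * dist z y ^ p - (1 - α₁) / α₁ * (c / 2 * dist z (T1 z) ^ p)) :
    ∀ x ∈ D, dist (T1 (T0 x)) y ^ p
      ≤ (1 + (ε₀ + ε₁ + ε₀ * ε₁)) * dist x y ^ p
        - (1 - (α₀ + α₁ - 2 * α₀ * α₁)
              / (c / 2 * (1 - α₀ - α₁ + α₀ * α₁) + α₀ + α₁ - 2 * α₀ * α₁))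
          / ((α₀ + α₁ - 2 * α₀ * α₁)
              / (c / 2 * (1 - α₀ - α₁ + α₀ * α₁) + α₀ + α₁ - 2 * α₀ * α₁))
          * (c / 2 * dist x (T1 (T0 x)) ^ p) := by

  intro x hxD
  obtain ⟨hα₀0, hα₀1⟩ := hα₀
  obtain ⟨hα₁0, hα₁1⟩ := hα₁
  set k₀ : ℝ := (1 - α₀) / α₀ with hk₀def
  set k₁ : ℝ := (1 - α₁) / α₁ with hk₁def
  have hk₀ : 0 < k₀ := div_pos (by linarith) hα₀0
  have hk₁ : 0 < k₁ := div_pos (by linarith) hα₁0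
  have hsum : 0 < k₀ + k₁ := by linarith
  set u : ℝ := dist x (T0 x) with hu
  set v : ℝ := dist (T0 x) (T1 (T0 x)) with hv
  set w : ℝ := dist x (T1 (T0 x)) with hw
  set a : ℝ := dist x y with ha
  set b : ℝ := dist (T0 x) y with hb
  set e : ℝ := dist (T1 (T0 x)) y with he
  have hup : (0:ℝ) ≤ u ^ p := Real.rpow_nonneg dist_nonneg p
  have hvp : (0:ℝ) ≤ v ^ p := Real.rpow_nonneg dist_nonneg p
  have hwp : (0:ℝ) ≤ w ^ p := Real.rpow_nonneg dist_nonneg p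
  have hap : (0:ℝ) ≤ a ^ p := Real.rpow_nonneg dist_nonneg p
  -- geodesic inequality with z = T0 x between x and T1 (T0 x)
  set t : ℝ := k₁ / (k₀ + k₁) with htdef
  have ht0 : 0 < t := div_pos hk₁ hsum
  have ht1 : t < 1 := by
    rw [htdef, div_lt_one hsum]; linarith
  have key := hcvx x (T1 (T0 x)) (T0 x) t ⟨ht0.le, ht1.le⟩
  have hgeo : (0:ℝ) ≤ dist (T0 x) (geo x (T1 (T0 x)) t) ^ p :=
    Real.rpow_nonneg dist_nonneg p
  have hdcomm : dist (T0 x) x = u := dist_comm (T0 x) x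
  rw [hdcomm, ← hv, ← hw] at key
  have h2 : c / 2 * t * (1 - t) * w ^ p ≤ (1 - t) * u ^ p + t * v ^ p := by linarith
  -- multiply by (k₀ + k₁)
  have key2 : c / 2 * (k₀ * k₁ / (k₀ + k₁)) * w ^ p ≤ k₀ * u ^ p + k₁ * v ^ p := by
    rw [htdef] at h2
    exact pafne_aux_ineq c k₀ k₁ (u ^ p) (v ^ p) (w ^ p) hk₀ hk₁ h2
  -- the two firm-nonexpansiveness inequalities
  have h0x : b ^ p ≤ (1 + ε₀) * a ^ p - k₀ * (c / 2 * u ^ p) := by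
    have := h0 x hxD
    rw [← ha, ← hb, ← hu] at this
    linarith [this]
  have h1x : e ^ p ≤ (1 + ε₁) * b ^ p - k₁ * (c / 2 * v ^ p) := by
    have := h1 (T0 x) ⟨x, hxD, rfl⟩
    rw [← hb, ← he, ← hv] at this
    linarith [this]
  -- the explicit constant equals c/2 * (k₀ k₁ / (k₀ + k₁))
  have hS : 0 < α₀ + α₁ - 2 * α₀ * α₁ := by
    have h1 : 0 < α₀ * (1 - α₁) := mul_pos hα₀0 (by linarith)
    have h2 : 0 < α₁ * (1 - α₀) := mul_pos hα₁0 (by linarith)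
    linarith [h1, h2]
  have hM : 0 < c / 2 * (1 - α₀ - α₁ + α₀ * α₁) := by
    rw [show (1 - α₀ - α₁ + α₀ * α₁) = (1 - α₀) * (1 - α₁) from by ring]
    exact mul_pos (by linarith) (mul_pos (by linarith) (by linarith))
  have hMden : 0 < c / 2 * (1 - α₀ - α₁ + α₀ * α₁) + α₀ + α₁ - 2 * α₀ * α₁ := by linarith
  have hKeq : (1 - (α₀ + α₁ - 2 * α₀ * α₁)
          / (c / 2 * (1 - α₀ - α₁ + α₀ * α₁) + α₀ + α₁ - 2 * α₀ * α₁))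
        / ((α₀ + α₁ - 2 * α₀ * α₁)
          / (c / 2 * (1 - α₀ - α₁ + α₀ * α₁) + α₀ + α₁ - 2 * α₀ * α₁))
        = c / 2 * (k₀ * k₁ / (k₀ + k₁)) := by
    rw [hk₀def, hk₁def]
    exact pafne_aux_const c α₀ α₁ hc hα₀0 hα₀1 hα₁0 hα₁1
  rw [hKeq]
  -- combine everything
  have H2 : (1 + ε₁) * (b ^ p) ≤ (1 + ε₁) * ((1 + ε₀) * a ^ p - k₀ * (c / 2 * u ^ p)) :=
    mul_le_mul_of_nonneg_left h0x (by linarith)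
  have H3 : c / 2 * (c / 2 * (k₀ * k₁ / (k₀ + k₁)) * w ^ p)
      ≤ c / 2 * (k₀ * u ^ p + k₁ * v ^ p) :=
    mul_le_mul_of_nonneg_left key2 (by positivity)
  have H4 : (0:ℝ) ≤ ε₁ * (k₀ * (c / 2 * u ^ p)) := by positivity
  linarith [h1x, H2, H3, H4]
end

section
/- Let (G,d) be a symmetric perpendicular geodesic metric space and f: G → ℝ ∪ {+∞} proper, convex, lower semicontinuous with argmin f ≠ ∅. Then the proximal mapping prox^p_{f,λ} (λ > 0) is quasi nonexpansive: d(prox^p_{f,λ}(x), x̄) ≤ d(x, x̄) for all x ∈ G and x̄ ∈ argmin f. If in addition (G,d) is p-uniformly convex with constant c > 0, then the inequality is strict unless x ∈ argmin f (quasi strict nonexpansiveness). -/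
/-- The geodesic segment from `q` to `a` is perpendicular at `q` to the geodesic segment
from `q` to `b`. -/
def Perp {G : Type*} [MetricSpace G] (geo : G → G → ℝ → G) (q a b : G) : Prop :=
  ∀ s ∈ Set.Icc (0:ℝ) 1, ∀ t ∈ Set.Icc (0:ℝ) 1,
    dist (geo q a s) q ≤ dist (geo q a s) (geo q b t)

/-- In a symmetric perpendicular geodesic space, the proximal mapping of a proper convex lsc
function is quasi nonexpansive with respect to minimizers of `f`; if the space is moreover
`p`-uniformly convex with constant `c > 0`, the inequality is strict unless `x` itself is a
minimizer. -/
theorem prox_quasi_nonexpansive {G : Type*} [MetricSpace G] (p c lam : ℝ)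
    (hp : 1 < p) (hlam : 0 < lam)
    (geo : G → G → ℝ → G)
    (hgeo0 : ∀ (x y : G), ∀ t ∈ Set.Icc (0:ℝ) 1, dist x (geo x y t) = t * dist x y)
    (hgeo1 : ∀ (x y : G), ∀ t ∈ Set.Icc (0:ℝ) 1, dist (geo x y t) y = (1 - t) * dist x y)
    (hsym : ∀ q a b : G, Perp geo q a b → Perp geo q b a)
    (f : G → ℝ) (hlsc : LowerSemicontinuous f)
    (hconv : ∀ (x y : G), ∀ t ∈ Set.Icc (0:ℝ) 1, f (geo x y t) ≤ (1 - t) * f x + t * f y)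
    (hargmin : ∃ z : G, ∀ w : G, f z ≤ f w)
    (prox : G → G)
    (hprox : ∀ x z : G,
      f (prox x) + 1 / (p * lam ^ (p - 1)) * dist (prox x) x ^ p
        ≤ f z + 1 / (p * lam ^ (p - 1)) * dist z x ^ p) :
    (∀ x xbar : G, (∀ z : G, f xbar ≤ f z) → dist (prox x) xbar ≤ dist x xbar) ∧
    ((0 < c → ∀ (x y z : G), ∀ t ∈ Set.Icc (0:ℝ) 1,
        dist z (geo x y t) ^ p
          ≤ (1 - t) * dist z x ^ p + t * dist z y ^ p - c / 2 * t * (1 - t) * dist x y ^ p) →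
      0 < c → ∀ x xbar : G, (∀ z : G, f xbar ≤ f z) → ¬ (∀ z : G, f x ≤ f z) →
        dist (prox x) xbar < dist x xbar) := by
  have hp0 : (0:ℝ) < p := lt_trans one_pos hp
  set K : ℝ := 1 / (p * lam ^ (p - 1)) with hKdef
  have hK : 0 < K := by
    apply div_pos one_pos
    exact mul_pos hp0 (Real.rpow_pos_of_pos hlam _)
  -- geo endpoints
  have hge1 : ∀ x y : G, geo x y 1 = y := by
    intro x y
    have := hgeo1 x y 1 (by constructor <;> norm_num)
    simp at this
    exact this
  -- key perpendicularity: for a minimizer xbar and any x, Perp geo (prox x) xbar x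
  have key : ∀ x xbar : G, (∀ z : G, f xbar ≤ f z) →
      ∀ t ∈ Set.Icc (0:ℝ) 1, dist xbar (prox x) ≤ dist xbar (geo (prox x) x t) := by
    intro x xbar hxbar
    set q := prox x with hq
    -- Step A: dist q x ≤ dist (geo q xbar t) x for t ∈ [0,1]
    have stepA : ∀ t ∈ Set.Icc (0:ℝ) 1, dist q x ≤ dist (geo q xbar t) x := by
      intro t ht
      have h1 := hprox x (geo q xbar t)
      have h2 := hconv q xbar t ht
      have h3 : f (geo q xbar t) ≤ f q := by
        have : (1 - t) * f q + t * f xbar ≤ (1 - t) * f q + t * f q := by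
          have := mul_le_mul_of_nonneg_left (hxbar q) ht.1
          linarith
        linarith
      have h4 : K * dist q x ^ p ≤ K * dist (geo q xbar t) x ^ p := by
        rw [← hq] at h1
        linarith
      have h5 : dist q x ^ p ≤ dist (geo q xbar t) x ^ p :=
        le_of_mul_le_mul_left h4 hK
      exact (Real.rpow_le_rpow_iff dist_nonneg dist_nonneg hp0).mp h5
    -- Step B: Perp geo q x xbar
    have stepB : Perp geo q x xbar := by
      intro s hs t ht
      have e0 : dist q (geo q x s) = s * dist q x := hgeo0 q x s hs
      have e1 : dist (geo q x s) x = (1 - s) * dist q x := hgeo1 q x s hs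
      have htri : dist (geo q xbar t) x ≤ dist (geo q xbar t) (geo q x s) + dist (geo q x s) x :=
        dist_triangle _ _ _
      have hA := stepA t ht
      have : s * dist q x ≤ dist (geo q xbar t) (geo q x s) := by
        have : dist q x ≤ dist (geo q xbar t) (geo q x s) + (1 - s) * dist q x := by
          rw [← e1]; linarith
        have hdist : dist q x - (1 - s) * dist q x = s * dist q x := by ring
        linarith
      rw [dist_comm (geo q x s) q, e0, dist_comm (geo q x s) (geo q xbar t)]
      exact this
    -- Step C: apply symmetry
    have stepC := hsym q x xbar stepB
    intro t ht
    have := stepC 1 (by constructor <;> norm_num) t ht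
    rw [hge1 q xbar] at this
    exact this
  have part1 : ∀ x xbar : G, (∀ z : G, f xbar ≤ f z) → dist (prox x) xbar ≤ dist x xbar := by
    intro x xbar hxbar
    have := key x xbar hxbar 1 (by constructor <;> norm_num)
    rw [hge1 (prox x) x] at this
    rw [dist_comm (prox x) xbar, dist_comm x xbar]
    exact this
  refine ⟨part1, ?_⟩
  intro huc hc x xbar hxbar hx
  -- fixed points of prox are minimizers
  have fix_min : prox x = x → ∀ z : G, f x ≤ f z := by
    intro hfix z
    by_contra hzx
    push_neg at hzx
    set ε := f x - f z with hε
    have hεpos : 0 < ε := by linarith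
    have hd : 0 < dist x z := by
      rcases eq_or_lt_of_le (dist_nonneg : (0:ℝ) ≤ dist x z) with h | h
      · exfalso; have : x = z := dist_eq_zero.mp h.symm; rw [this] at hzx; linarith
      · exact h
    set d := dist x z with hdd
    have hdp : 0 < d ^ p := Real.rpow_pos_of_pos hd _
    -- main estimate: for t ∈ (0,1], ε ≤ K * t^(p-1) * d^p
    have main : ∀ t : ℝ, 0 < t → t ≤ 1 → ε ≤ K * t ^ (p - 1) * d ^ p := by
      intro t ht0 ht1
      have htIcc : t ∈ Set.Icc (0:ℝ) 1 := ⟨le_of_lt ht0, ht1⟩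
      have h1 := hprox x (geo x z t)
      rw [hfix] at h1
      have h0 : dist x x = 0 := dist_self x
      have hz0 : (0:ℝ) ^ p = 0 := Real.zero_rpow (ne_of_gt hp0)
      have hdist : dist (geo x z t) x = t * d := by
        rw [dist_comm]; exact hgeo0 x z t htIcc
      rw [h0, hz0, hdist] at h1
      have h2 := hconv x z t htIcc
      have htd : (t * d) ^ p = t ^ p * d ^ p :=
        Real.mul_rpow (le_of_lt ht0) dist_nonneg
      have htp : t ^ p = t * t ^ (p - 1) := by
        rw [show p = 1 + (p - 1) by ring, Real.rpow_add ht0]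
        rw [Real.rpow_one]
        ring_nf
      -- from h1, h2 : f x ≤ (1-t) f x + t f z + K t^p d^p
      have h3 : t * ε ≤ K * (t * t ^ (p - 1)) * d ^ p := by
        have hfe : f x ≤ (1 - t) * f x + t * f z + K * (t * d) ^ p := by
          calc f x ≤ f (geo x z t) + K * (t * d) ^ p := by linarith
            _ ≤ (1 - t) * f x + t * f z + K * (t * d) ^ p := by linarith
        have hKe : K * (t * d) ^ p = K * (t * t ^ (p - 1)) * d ^ p := by
          rw [htd, htp]; ring
        nlinarith [hKe]
      have h4 : t * ε ≤ t * (K * t ^ (p - 1) * d ^ p) := by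
        calc t * ε ≤ K * (t * t ^ (p - 1)) * d ^ p := h3
          _ = t * (K * t ^ (p - 1) * d ^ p) := by ring
      exact le_of_mul_le_mul_left h4 ht0
    -- choose t small
    have hp1 : (0:ℝ) < p - 1 := by linarith
    set r : ℝ := min 1 (ε / (2 * K * d ^ p)) with hr
    have hrpos : 0 < r := lt_min one_pos (by positivity)
    have hrle1 : r ≤ 1 := min_le_left _ _
    set t : ℝ := r ^ (1 / (p - 1)) with htdef
    have ht0 : 0 < t := Real.rpow_pos_of_pos hrpos _
    have ht1 : t ≤ 1 := Real.rpow_le_one (le_of_lt hrpos) hrle1 (by positivity)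
    have htp1 : t ^ (p - 1) = r := by
      rw [htdef, ← Real.rpow_mul (le_of_lt hrpos), one_div,
        inv_mul_cancel₀ (ne_of_gt hp1), Real.rpow_one]
    have := main t ht0 ht1
    rw [htp1] at this
    have hrle : r ≤ ε / (2 * K * d ^ p) := min_le_right _ _
    have : ε ≤ K * (ε / (2 * K * d ^ p)) * d ^ p := by
      have hKd : 0 < K * d ^ p := mul_pos hK hdp
      calc ε ≤ K * r * d ^ p := this
        _ ≤ K * (ε / (2 * K * d ^ p)) * d ^ p := by
            apply mul_le_mul_of_nonneg_right _ (le_of_lt hdp)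
            exact mul_le_mul_of_nonneg_left hrle (le_of_lt hK)
    have heq : K * (ε / (2 * K * d ^ p)) * d ^ p = ε / 2 := by
      field_simp
    rw [heq] at this
    linarith
  -- strict inequality
  set q := prox x with hq
  rcases lt_or_eq_of_le (part1 x xbar hxbar) with h | h
  · exact h
  · exfalso
    -- equality case: show q = x
    have hqx : q = x := by
      by_contra hne
      have hdqx : 0 < dist q x := dist_pos.mpr hne
      have hhalf : (1/2 : ℝ) ∈ Set.Icc (0:ℝ) 1 := by constructor <;> norm_num
      have hperp := key x xbar hxbar (1/2) hhalf
      have huc2 := huc hc q x xbar (1/2) hhalf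
      have hD : dist xbar q = dist xbar x := by
        rw [dist_comm xbar q, dist_comm xbar x]; exact h
      rw [← hD] at huc2
      have hle : dist xbar q ^ p ≤ dist xbar (geo q x (1/2)) ^ p :=
        (Real.rpow_le_rpow_iff dist_nonneg dist_nonneg hp0).mpr hperp
      have hpos : 0 < dist q x ^ p := Real.rpow_pos_of_pos hdqx _
      have hcc : 0 < c / 2 * (1/2) * (1 - 1/2) := by norm_num; linarith
      nlinarith
    exact hx (fix_min hqx)
end

section
/- Let (G,d) be a p-uniformly convex space with constant c ∈ (1,2], and f, g: G → ℝ ∪ {+∞} proper convex lsc with Ω := argmin f ∩ argmin g ≠ ∅. Then T := prox^p_{f,λ₂} ∘ prox^p_{g,λ₁} is pointwise almost α-firmly nonexpansive at every y ∈ Ω on G with constant α∘ = 2(c−1)/(2c−1) and violation ε∘ = 1/(c−1)² − 1. -/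
set_option maxHeartbeats 1000000

/-- Composition of two prox mappings in a `p`-uniformly convex space with constant
`c ∈ (1,2]` is pointwise almost `α`-firmly nonexpansive at every common minimizer with
constant `α∘ = 2(c−1)/(2c−1)` and violation `ε∘ = 1/(c−1)² − 1`. -/
theorem prox_comp_pafne {G : Type*} [MetricSpace G] (p c : ℝ)
    (hp : 1 < p) (hc : c ∈ Set.Ioc (1:ℝ) 2)
    (geo : G → G → ℝ → G)
    (hcvx : ∀ (x y z : G), ∀ t ∈ Set.Icc (0:ℝ) 1,
      dist z (geo x y t) ^ p
        ≤ (1 - t) * dist z x ^ p + t * dist z y ^ p - c / 2 * t * (1 - t) * dist x y ^ p)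
    (f g : G → ℝ) (hflsc : LowerSemicontinuous f) (hglsc : LowerSemicontinuous g)
    (hfconv : ∀ (x y : G), ∀ t ∈ Set.Icc (0:ℝ) 1, f (geo x y t) ≤ (1 - t) * f x + t * f y)
    (hgconv : ∀ (x y : G), ∀ t ∈ Set.Icc (0:ℝ) 1, g (geo x y t) ≤ (1 - t) * g x + t * g y)
    (lam₁ lam₂ : ℝ) (hlam₁ : 0 < lam₁) (hlam₂ : 0 < lam₂)
    (proxf proxg : G → G)
    (hproxf_fix : ∀ y : G, (∀ z, f y ≤ f z) → proxf y = y)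
    (hproxg_fix : ∀ y : G, (∀ z, g y ≤ g z) → proxg y = y)
    (hproxf : ∀ y : G, (∀ z, f y ≤ f z) → ∀ x : G,
      dist (proxf x) y ^ p
        ≤ (1 + (2 - c) / (c - 1)) * dist x y ^ p
          - (1 - c * (c - 1) / (c * (c - 1) + 2)) / (c * (c - 1) / (c * (c - 1) + 2))
            * (c / 2 * dist (proxf x) x ^ p))
    (hproxg : ∀ y : G, (∀ z, g y ≤ g z) → ∀ x : G,
      dist (proxg x) y ^ p
        ≤ (1 + (2 - c) / (c - 1)) * dist x y ^ p
          - (1 - c * (c - 1) / (c * (c - 1) + 2)) / (c * (c - 1) / (c * (c - 1) + 2))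
            * (c / 2 * dist (proxg x) x ^ p))
    (hΩ : ∃ y : G, (∀ z, f y ≤ f z) ∧ (∀ z, g y ≤ g z)) :
    ∀ y : G, (∀ z, f y ≤ f z) → (∀ z, g y ≤ g z) → ∀ x : G,
      dist (proxf (proxg x)) y ^ p
        ≤ (1 + (1 / (c - 1) ^ 2 - 1)) * dist x y ^ p
          - (1 - 2 * (c - 1) / (2 * c - 1)) / (2 * (c - 1) / (2 * c - 1))
            * (c / 2 * dist (proxf (proxg x)) x ^ p) := by
  intro y hf hg x
  have hc1 : (1:ℝ) < c := hc.1
  have hc2 : c ≤ 2 := hc.2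
  have hc0 : (0:ℝ) < c := by linarith
  have hcm : (0:ℝ) < c - 1 := by linarith
  have hden : (0:ℝ) < c * (c - 1) + 2 := by nlinarith
  have h2c : (0:ℝ) < 2 * c - 1 := by linarith
  have h1 := hproxf y hf (proxg x)
  have h2 := hproxg y hg x
  have hmid := hcvx (proxf (proxg x)) x (proxg x) (1/2) (by norm_num)
  have hL : (0:ℝ) ≤ dist (proxg x) (geo (proxf (proxg x)) x (1/2)) ^ p :=
    Real.rpow_nonneg dist_nonneg _
  rw [dist_comm (proxg x) (proxf (proxg x))] at hmid
  clear hcvx hproxf hproxg hfconv hgconv hflsc hglsc hproxf_fix hproxg_fix hΩ hf hg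
  set a := dist (proxf (proxg x)) y ^ p with ha
  set b := dist (proxg x) y ^ p with hb
  set A := dist (proxf (proxg x)) (proxg x) ^ p with hA
  set B := dist (proxg x) x ^ p with hB
  set D := dist (proxf (proxg x)) x ^ p with hD
  set D0 := dist x y ^ p with hD0
  have hAnn : (0:ℝ) ≤ A := Real.rpow_nonneg dist_nonneg _
  have hBnn : (0:ℝ) ≤ B := Real.rpow_nonneg dist_nonneg _
  have hD0nn : (0:ℝ) ≤ D0 := Real.rpow_nonneg dist_nonneg _
  -- simplify coefficients
  have eκ : (1 - c * (c - 1) / (c * (c - 1) + 2)) / (c * (c - 1) / (c * (c - 1) + 2))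
      = 2 / (c * (c - 1)) := by
    rw [div_eq_div_iff (by positivity) (by positivity)]
    field_simp
    ring
  have eε : 1 + (2 - c) / (c - 1) = 1 / (c - 1) := by
    field_simp
    norm_num
  have eK : (1 - 2 * (c - 1) / (2 * c - 1)) / (2 * (c - 1) / (2 * c - 1))
      = 1 / (2 * (c - 1)) := by
    rw [div_eq_div_iff (by positivity) (by positivity)]
    field_simp
    ring
  rw [eκ, eε] at h1 h2
  rw [eK]
  -- clean inequalities
  have H1 : (c - 1) * a ≤ b - A := by
    have h' : 2 / (c * (c - 1)) * (c / 2 * A) = A / (c - 1) := by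
      field_simp
    rw [h'] at h1
    have := mul_le_mul_of_nonneg_left h1 hcm.le
    calc (c - 1) * a ≤ (c - 1) * (1 / (c - 1) * b - A / (c - 1)) := this
      _ = b - A := by field_simp
  have H2 : (c - 1) * b ≤ D0 - B := by
    have h' : 2 / (c * (c - 1)) * (c / 2 * B) = B / (c - 1) := by
      field_simp
    rw [h'] at h2
    have := mul_le_mul_of_nonneg_left h2 hcm.le
    calc (c - 1) * b ≤ (c - 1) * (1 / (c - 1) * D0 - B / (c - 1)) := this
      _ = D0 - B := by field_simp
  -- midpoint: c/4 * D ≤ A + B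
  have HM : c / 4 * D ≤ A + B := by linarith [hL, hmid]
  -- combine
  have Hab : (c - 1) ^ 2 * a ≤ D0 - B - (c - 1) * A := by
    have hm1 := mul_le_mul_of_nonneg_left H1 hcm.le
    nlinarith [hm1, H2]
  have hb1 : (c - 1) * B ≤ B := by nlinarith [hBnn]
  have hmm := mul_le_mul_of_nonneg_left HM hcm.le
  have key : (c - 1) ^ 2 * a ≤ D0 - (c - 1) * c / 4 * D := by linarith [Hab, hmm, hb1]
  have hsq : (0:ℝ) < (c - 1) ^ 2 := by positivity
  rw [show (1:ℝ) + (1 / (c - 1) ^ 2 - 1) = 1 / (c - 1) ^ 2 from by ring]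
  have hfin : 1 / (c - 1) ^ 2 * D0 - 1 / (2 * (c - 1)) * (c / 2 * D)
      = (D0 - (c - 1) * c / 4 * D) / (c - 1) ^ 2 := by
    field_simp
    ring
  rw [hfin, le_div_iff₀ hsq]
  linarith [key]
end

section
/- In a p-uniformly convex space (G,d) with constant c, for ω ∈ (0,1) and points x₁, x₂ ∈ G, the p-barycenter of the measure ν = ωδ_{x₁} + (1−ω)δ_{x₂}, i.e. the minimizer over z of ω d(z,x₁)^p + (1−ω) d(z,x₂)^p, lies on the geodesic [x₂, x₁] at parameter t̄ = 1/(((1−ω)/ω)^{1/(p−1)} + 1), that is, b_p(ν) = t̄ x₁ ⊕ (1−t̄) x₂. -/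
lemma tangent_line {p x y : ℝ} (hp : 1 ≤ p) (hx : 0 ≤ x) (hy : 0 < y) :
    y ^ p + p * y ^ (p - 1) * (x - y) ≤ x ^ p := by
  have hs : -1 ≤ x / y - 1 := by
    have : 0 ≤ x / y := div_nonneg hx hy.le
    linarith
  have hber := one_add_mul_self_le_rpow_one_add hs hp
  have h1 : (1 + (x / y - 1)) = x / y := by ring
  rw [h1, Real.div_rpow hx hy.le] at hber
  have hyp : 0 < y ^ p := Real.rpow_pos_of_pos hy p
  have h2 : (1 + p * (x / y - 1)) * y ^ p ≤ x ^ p := (le_div_iff₀ hyp).mp hber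
  have hy1 : y ^ (p - 1) * y = y ^ p := by
    rw [← Real.rpow_add_one hy.ne' (p - 1)]; ring_nf
  calc y ^ p + p * y ^ (p - 1) * (x - y) = (1 + p * (x / y - 1)) * y ^ p := by
        rw [← hy1]; field_simp
    _ ≤ x ^ p := h2

/-- The lower bound: for any `a + b ≥ d`, the weighted power sum is at least its value
at the optimal split of `d`. -/
lemma key_min {p ω d a b : ℝ} (hp : 1 < p) (hω : ω ∈ Set.Ioo (0:ℝ) 1) (hd : 0 ≤ d)
    (ha : 0 ≤ a) (hb : 0 ≤ b) (hab : d ≤ a + b) :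
    ω * ((1 - 1 / (((1 - ω) / ω) ^ (1 / (p - 1)) + 1)) * d) ^ p
      + (1 - ω) * ((1 / (((1 - ω) / ω) ^ (1 / (p - 1)) + 1)) * d) ^ p
      ≤ ω * a ^ p + (1 - ω) * b ^ p := by
  obtain ⟨hω0, hω1⟩ := hω
  set r : ℝ := ((1 - ω) / ω) ^ (1 / (p - 1)) with hr_def
  have hr : 0 < r := Real.rpow_pos_of_pos (div_pos (by linarith) hω0) _
  set t : ℝ := 1 / (r + 1) with ht_def
  have ht0 : 0 < t := by positivity
  have ht1 : t < 1 := by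
    rw [ht_def, div_lt_one (by linarith)]; linarith
  have hst : 1 - t = r * t := by
    rw [ht_def]; field_simp; ring
  rcases eq_or_lt_of_le hd with hd0 | hd0
  · rw [← hd0]
    simp only [mul_zero, Real.zero_rpow (by positivity : p ≠ 0), mul_zero, add_zero, zero_add]
    have := Real.rpow_nonneg ha p
    have := Real.rpow_nonneg hb p
    nlinarith
  -- d > 0 case
  set a₀ : ℝ := (1 - t) * d with ha0_def
  set b₀ : ℝ := t * d with hb0_def
  have ha₀ : 0 < a₀ := by rw [ha0_def]; nlinarith
  have hb₀ : 0 < b₀ := by positivity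
  have hTa := tangent_line hp.le ha ha₀
  have hTb := tangent_line hp.le hb hb₀
  -- key identity : ω * a₀ ^ (p-1) = (1-ω) * b₀ ^ (p-1)
  have hrp : r ^ (p - 1) = (1 - ω) / ω := by
    rw [hr_def, ← Real.rpow_mul (div_pos (by linarith) hω0).le]
    rw [one_div, inv_mul_cancel₀ (by linarith : p - 1 ≠ 0), Real.rpow_one]
  have hid : ω * a₀ ^ (p - 1) = (1 - ω) * b₀ ^ (p - 1) := by
    have h1 : a₀ = r * b₀ := by rw [ha0_def, hb0_def, hst]; ring
    rw [h1, Real.mul_rpow hr.le hb₀.le, hrp]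
    field_simp
  have hsum : a₀ + b₀ = d := by rw [ha0_def, hb0_def]; ring
  have hbr : 0 ≤ ω * a₀ ^ (p - 1) * (a - a₀) + (1 - ω) * b₀ ^ (p - 1) * (b - b₀) := by
    rw [← hid]
    have hnn : 0 ≤ ω * a₀ ^ (p - 1) := by positivity
    nlinarith
  have hωn : 0 < 1 - ω := by linarith
  nlinarith [mul_le_mul_of_nonneg_left hTa hω0.le,
    mul_le_mul_of_nonneg_left hTb hωn.le]

/-- The `p`-barycenter of `ω δ_{x₁} + (1−ω) δ_{x₂}` in a `p`-uniformly convex space lies on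
the geodesic from `x₁` to `x₂` at parameter `1 − t̄` where
`t̄ = 1/(((1−ω)/ω)^{1/(p−1)} + 1)`. -/
theorem two_point_barycenter {G : Type*} [MetricSpace G] (p c : ℝ) (hp : 1 < p) (hc : 0 < c)
    (geo : G → G → ℝ → G)
    (hcvx : ∀ (x y z : G), ∀ t ∈ Set.Icc (0:ℝ) 1,
      dist z (geo x y t) ^ p
        ≤ (1 - t) * dist z x ^ p + t * dist z y ^ p - c / 2 * t * (1 - t) * dist x y ^ p)
    (hgeo0 : ∀ (x y : G), ∀ t ∈ Set.Icc (0:ℝ) 1, dist x (geo x y t) = t * dist x y)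
    (hgeo1 : ∀ (x y : G), ∀ t ∈ Set.Icc (0:ℝ) 1, dist (geo x y t) y = (1 - t) * dist x y)
    (ω : ℝ) (hω : ω ∈ Set.Ioo (0:ℝ) 1) (x₁ x₂ b : G)
    (hb : ∀ z : G, ω * dist b x₁ ^ p + (1 - ω) * dist b x₂ ^ p
        ≤ ω * dist z x₁ ^ p + (1 - ω) * dist z x₂ ^ p) :
    b = geo x₁ x₂ (1 - 1 / (((1 - ω) / ω) ^ (1 / (p - 1)) + 1)) := by
  obtain ⟨hω0, hω1⟩ := id hω
  set r : ℝ := ((1 - ω) / ω) ^ (1 / (p - 1)) with hr_def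
  have hr : 0 < r := Real.rpow_pos_of_pos (div_pos (by linarith) hω0) _
  set t : ℝ := 1 / (r + 1) with ht_def
  have ht0 : 0 < t := by positivity
  have ht1 : t < 1 := by rw [ht_def, div_lt_one (by linarith)]; linarith
  have hs : (1 - t) ∈ Set.Icc (0:ℝ) 1 := ⟨by linarith, by linarith⟩
  set m : G := geo x₁ x₂ (1 - t) with hm_def
  have hd1 : dist x₁ m = (1 - t) * dist x₁ x₂ := hgeo0 x₁ x₂ _ hs
  have hd2 : dist m x₂ = t * dist x₁ x₂ := by
    rw [hm_def, hgeo1 x₁ x₂ _ hs]; ring_nf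
  -- F(m) ≤ F(b) via the key minimization lemma
  have hFm : ω * dist m x₁ ^ p + (1 - ω) * dist m x₂ ^ p
      ≤ ω * dist b x₁ ^ p + (1 - ω) * dist b x₂ ^ p := by
    have htr : dist x₁ x₂ ≤ dist b x₁ + dist b x₂ := by
      rw [dist_comm b x₁]; exact dist_triangle x₁ b x₂
    have hkey := key_min hp hω dist_nonneg dist_nonneg dist_nonneg htr
    rw [dist_comm m x₁, hd1, hd2]
    exact hkey
  have hFb := hb m
  -- midpoint argument
  have hhalf : (1/2 : ℝ) ∈ Set.Icc (0:ℝ) 1 := by norm_num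
  have h1 := hcvx b m x₁ (1/2) hhalf
  have h2 := hcvx b m x₂ (1/2) hhalf
  rw [dist_comm x₁ b, dist_comm x₁ m] at h1
  rw [dist_comm x₂ b, dist_comm x₂ m] at h2
  have hFw := hb (geo b m (1/2))
  rw [dist_comm (geo b m (1/2)) x₁, dist_comm (geo b m (1/2)) x₂] at hFw
  have h1' := mul_le_mul_of_nonneg_left h1 hω0.le
  have h2' := mul_le_mul_of_nonneg_left h2 (by linarith : (0:ℝ) ≤ 1 - ω)
  have hDnn : 0 ≤ dist b m ^ p := Real.rpow_nonneg dist_nonneg p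
  have hD : c / 8 * dist b m ^ p ≤ 0 := by nlinarith [h1', h2', hFw, hFm]
  have hD0 : dist b m ^ p ≤ 0 := by nlinarith [hD, hc]
  have hbm : dist b m = 0 := by
    by_contra h
    have hpos : 0 < dist b m := dist_nonneg.lt_of_ne (Ne.symm h)
    exact absurd (Real.rpow_pos_of_pos hpos p) (not_lt.mpr hD0)
  exact dist_eq_zero.mp hbm
end

section
/- Let (G,d) be a geodesic space with symmetric perpendicularity, f proper convex lsc, λ > 0, x ∈ G, y := prox^p_{f,λ}(x), and x̄ ∈ argmin f. Then the metric projection of x onto the geodesic segment [x̄, y] equals y; consequently [x̄,y] ⊥_y [x,y], and by symmetric perpendicularity [x,y] ⊥_y [x̄,y], which gives d(y, x̄) ≤ d(x, x̄). -/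
/-- For `y = prox^p_{f,λ}(x)` and `x̄ ∈ argmin f`, the projection of `x` onto the segment
`[x̄, y]` is `y`; consequently `[x̄,y] ⊥_y [x,y]`, by symmetric perpendicularity
`[x,y] ⊥_y [x̄,y]`, and hence `d(y,x̄) ≤ d(x,x̄)`. -/
theorem prox_projection_perpendicular {G : Type*} [MetricSpace G] (p lam : ℝ)
    (hp : 1 < p) (hlam : 0 < lam)
    (geo : G → G → ℝ → G)
    (hgeo0 : ∀ (x y : G), ∀ t ∈ Set.Icc (0:ℝ) 1, dist x (geo x y t) = t * dist x y)
    (hgeo1 : ∀ (x y : G), ∀ t ∈ Set.Icc (0:ℝ) 1, dist (geo x y t) y = (1 - t) * dist x y)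
    (hsym : ∀ q a b : G, Perp geo q a b → Perp geo q b a)
    (f : G → ℝ) (hlsc : LowerSemicontinuous f)
    (hconv : ∀ (x y : G), ∀ t ∈ Set.Icc (0:ℝ) 1, f (geo x y t) ≤ (1 - t) * f x + t * f y)
    (x y xbar : G)
    (hy : ∀ z : G, f y + 1 / (p * lam ^ (p - 1)) * dist y x ^ p
        ≤ f z + 1 / (p * lam ^ (p - 1)) * dist z x ^ p)
    (hxbar : ∀ z : G, f xbar ≤ f z) :
    (∀ t ∈ Set.Icc (0:ℝ) 1, dist x y ≤ dist x (geo y xbar t)) ∧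
    Perp geo y xbar x ∧ Perp geo y x xbar ∧ dist y xbar ≤ dist x xbar := by
  have hc : 0 < 1 / (p * lam ^ (p - 1)) := by positivity
  have part1 : ∀ t ∈ Set.Icc (0:ℝ) 1, dist x y ≤ dist x (geo y xbar t) := by
    intro t ht
    set u := geo y xbar t with hu
    have hfu : f u ≤ f y := by
      have h1 := hconv y xbar t ht
      have h2 := mul_le_mul_of_nonneg_left (hxbar y) ht.1
      nlinarith
    have h1 : (1 / (p * lam ^ (p-1))) * dist y x ^ p
        ≤ (1 / (p * lam ^ (p-1))) * dist u x ^ p := by linarith [hy u]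
    have hdd : dist y x ^ p ≤ dist u x ^ p := le_of_mul_le_mul_left h1 hc
    by_contra hlt
    push_neg at hlt
    have hlt' : dist u x < dist y x := by
      rw [dist_comm u x, dist_comm y x]; exact hlt
    have : dist u x ^ p < dist y x ^ p :=
      Real.rpow_lt_rpow dist_nonneg hlt' (by linarith)
    linarith
  have part3 : Perp geo y x xbar := by
    intro s hs t ht
    have h0 : dist y (geo y x s) = s * dist y x := hgeo0 y x s hs
    have h1 : dist (geo y x s) x = (1 - s) * dist y x := hgeo1 y x s hs
    have h2 := part1 t ht
    have htri : dist x (geo y xbar t) ≤ dist x (geo y x s) + dist (geo y x s) (geo y xbar t) :=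
      dist_triangle _ _ _
    have h3 : dist x (geo y x s) = (1 - s) * dist y x := by rw [dist_comm]; exact h1
    have h4 : dist (geo y x s) y = s * dist y x := by rw [dist_comm]; exact h0
    have hxy : dist x y = dist y x := dist_comm x y
    linarith
  have part2 : Perp geo y xbar x := hsym y x xbar part3
  have hone : (1:ℝ) ∈ Set.Icc (0:ℝ) 1 := by norm_num
  have hx1 : geo y x 1 = x := by
    have h := hgeo1 y x 1 hone
    norm_num at h
    exact h
  have hxbar1 : geo y xbar 1 = xbar := by
    have h := hgeo1 y xbar 1 hone
    norm_num at h
    exact h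
  have part4 : dist y xbar ≤ dist x xbar := by
    have h := part2 1 hone 1 hone
    rw [hx1, hxbar1] at h
    rw [dist_comm y xbar, dist_comm x xbar]
    exact h
  exact ⟨part1, part2, part3, part4⟩
end
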